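/- Let A be an m×m real symmetric matrix partitioned as A = [[W, A21ᵀ],[A21, A22]] where W is the top-left c×c block. If rank(W) = rank(A), then there exists a matrix X ∈ ℝ^{(m−c)×c} such that A21 = X W and A22 = X W Xᵀ; consequently A = [I_c; X] W [I_c, Xᵀ]. -/

import Mathlib

open Matrix

/-- If every column of `M` is in the column space of `N`, then `M = N * X`. -/
lemma exists_mul_of_range_le {k : Type*} [Fintype k] {m n : ℕ}
    (N : Matrix k (Fin m) ℝ) (M : Matrix k (Fin n) ℝ)
    (h : LinearMap.range M.mulVecLin ≤ LinearMap.range N.mulVecLin) :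
    ∃ X : Matrix (Fin m) (Fin n) ℝ, M = N * X := by
  have hcol : ∀ j : Fin n, ∃ v : Fin m → ℝ, N *ᵥ v = M *ᵥ Pi.single j 1 := by
    intro j
    exact h ⟨Pi.single j 1, rfl⟩
  choose v hv using hcol
  refine ⟨Matrix.of fun i j => v j i, ?_⟩
  ext i j
  have := congrFun (hv j) i
  simp only [mulVec, dotProduct] at this
  simp only [mul_apply, Matrix.of_apply]
  rw [this]
  simp [Pi.single_apply, mul_ite]

/-- If `A = [[W, A21ᵀ],[A21, A22]]` is symmetric and
`rank W = rank A`, then there is `X` with `A21 = X W`, `A22 = X W Xᵀ`, and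
consequently `A = [I; X] W [I, Xᵀ]`. -/
theorem rank_eq_imp_structure {c r : ℕ}
    (W : Matrix (Fin c) (Fin c) ℝ) (A21 : Matrix (Fin r) (Fin c) ℝ)
    (A22 : Matrix (Fin r) (Fin r) ℝ) (hW : Wᵀ = W) (hA22 : A22ᵀ = A22)
    (A : Matrix (Fin c ⊕ Fin r) (Fin c ⊕ Fin r) ℝ)
    (hA : A = Matrix.fromBlocks W A21ᵀ A21 A22)
    (hrank : W.rank = A.rank) :
    ∃ X : Matrix (Fin r) (Fin c) ℝ,
      A21 = X * W ∧ A22 = X * W * Xᵀ ∧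
        A = Matrix.fromRows (1 : Matrix (Fin c) (Fin c) ℝ) X * W *
              (Matrix.fromRows (1 : Matrix (Fin c) (Fin c) ℝ) X)ᵀ := by
  classical
  set C1 : Matrix (Fin c ⊕ Fin r) (Fin c) ℝ := fromRows W A21 with hC1def
  set C2 : Matrix (Fin c ⊕ Fin r) (Fin r) ℝ := fromRows A21ᵀ A22 with hC2def
  have hC1 : A * fromRows (1 : Matrix (Fin c) (Fin c) ℝ) (0 : Matrix (Fin r) (Fin c) ℝ) = C1 := by
    rw [hA, fromBlocks_mul_fromRows]
    simp [hC1def]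
  have hC2 : A * fromRows (0 : Matrix (Fin c) (Fin r) ℝ) (1 : Matrix (Fin r) (Fin r) ℝ) = C2 := by
    rw [hA, fromBlocks_mul_fromRows]
    simp [hC2def]
  -- rank W ≤ rank C1
  have hWC1 : W = fromCols (1 : Matrix (Fin c) (Fin c) ℝ) (0 : Matrix (Fin c) (Fin r) ℝ) * C1 := by
    rw [hC1def, fromCols_mul_fromRows]; simp
  have h1 : W.rank ≤ C1.rank := by
    rw [hWC1]; exact rank_mul_le_right _ _
  have h2 : C1.rank ≤ A.rank := by
    rw [← hC1]; exact rank_mul_le_left _ _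
  have hrC1 : C1.rank = A.rank := le_antisymm h2 (hrank ▸ h1)
  -- range C1 ≤ range A, with equal finrank, so equal
  have hle1 : LinearMap.range C1.mulVecLin ≤ LinearMap.range A.mulVecLin := by
    rw [← hC1, mulVecLin_mul]
    exact LinearMap.range_comp_le_range _ _
  have heq : LinearMap.range C1.mulVecLin = LinearMap.range A.mulVecLin :=
    Submodule.eq_of_le_of_finrank_eq hle1 hrC1
  have hle2 : LinearMap.range C2.mulVecLin ≤ LinearMap.range C1.mulVecLin := by
    rw [heq, ← hC2, mulVecLin_mul]
    exact LinearMap.range_comp_le_range _ _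
  obtain ⟨Y, hY⟩ := exists_mul_of_range_le C1 C2 hle2
  rw [hC1def, hC2def, fromRows_mul] at hY
  have hWY : A21ᵀ = W * Y := congrArg (fun M => Matrix.toRows₁ M) hY
  have hA22Y : A22 = A21 * Y := congrArg (fun M => Matrix.toRows₂ M) hY
  refine ⟨Yᵀ, ?_, ?_, ?_⟩
  · calc A21 = (A21ᵀ)ᵀ := (transpose_transpose _).symm
    _ = (W * Y)ᵀ := by rw [hWY]
    _ = Yᵀ * Wᵀ := transpose_mul _ _
    _ = Yᵀ * W := by rw [hW]
  · have hA21 : A21 = Yᵀ * W := by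
      rw [← hW, ← transpose_mul, ← hWY, transpose_transpose]
    rw [hA22Y, hA21, transpose_transpose]
  · have hA21 : A21 = Yᵀ * W := by
      rw [← hW, ← transpose_mul, ← hWY, transpose_transpose]
    rw [hA, fromRows_mul, Matrix.one_mul, transpose_fromRows, transpose_one,
      transpose_transpose, fromRows_mul_fromCols, Matrix.mul_one, Matrix.mul_one,
      ← hWY, ← hA21, ← hA22Y]
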